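/- arXiv:1602.01657 — 6 statements merged into one kernel-verified Lean document; each statement's English description precedes it below -/
import Mathlib

section
/- Let X and Y be nonnegative real-valued random variables with distribution functions F_X and F_Y. Then there exists t0 > 0 with F_X(t) ≥ F_Y(t) for all t ∈ [0, t0] if and only if there exists t0 > 0 and a coupling (X', Y') of X and Y (i.e., a pair of random variables on a common probability space with the same marginal distributions as X and Y) such that min{X', t0} ≤ min{Y', t0} almost surely. -/
open MeasureTheory

section Quantile

/-- Quantile (generalized inverse cdf) of a measure on `ℝ`. -/
noncomputable def quantileAux (m : Measure ℝ) (u : ℝ) : ℝ :=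
  sInf {x | u ≤ ProbabilityTheory.cdf m x}

/-- Quantile clamped outside `(0,1)` to a constant, to make it measurable. -/
noncomputable def quantileC (m : Measure ℝ) (u : ℝ) : ℝ :=
  if u ∈ Set.Ioo (0:ℝ) 1 then quantileAux m u else quantileAux m (1/2)

variable (m : Measure ℝ) [IsProbabilityMeasure m]

lemma quantile_set_nonempty {u : ℝ} (hu : u < 1) :
    {x | u ≤ ProbabilityTheory.cdf m x}.Nonempty := by
  have h := (ProbabilityTheory.tendsto_cdf_atTop m).eventually (eventually_ge_nhds hu)
  exact h.exists

lemma quantile_set_bddBelow {u : ℝ} (hu : 0 < u) :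
    BddBelow {x | u ≤ ProbabilityTheory.cdf m x} := by
  have h := (ProbabilityTheory.tendsto_cdf_atBot m).eventually (eventually_lt_nhds hu)
  obtain ⟨x0, hx0⟩ := Filter.eventually_atBot.1 h
  exact ⟨x0, fun y hy => le_of_not_gt fun hlt => absurd hy (not_le.2 (hx0 y hlt.le))⟩

lemma quantileAux_le_iff {u : ℝ} (hu : u ∈ Set.Ioo (0:ℝ) 1) (x : ℝ) :
    quantileAux m u ≤ x ↔ u ≤ ProbabilityTheory.cdf m x := by
  constructor
  · intro h
    have key : ∀ z, x < z → u ≤ ProbabilityTheory.cdf m z := by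
      intro z hz
      obtain ⟨y, hy, hyz⟩ := exists_lt_of_csInf_lt (quantile_set_nonempty m hu.2)
        (lt_of_le_of_lt h hz)
      exact hy.trans (ProbabilityTheory.monotone_cdf m hyz.le)
    have htend : Filter.Tendsto (ProbabilityTheory.cdf m) (nhdsWithin x (Set.Ioi x))
        (nhds (ProbabilityTheory.cdf m x)) :=
      ((ProbabilityTheory.cdf m).right_continuous x).tendsto.mono_left
        (nhdsWithin_mono x Set.Ioi_subset_Ici_self)
    refine ge_of_tendsto htend ?_
    filter_upwards [self_mem_nhdsWithin] with z hz using key z hz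
  · intro h
    exact csInf_le (quantile_set_bddBelow m hu.1) h

lemma le_cdf_quantileAux {u : ℝ} (hu : u ∈ Set.Ioo (0:ℝ) 1) :
    u ≤ ProbabilityTheory.cdf m (quantileAux m u) :=
  (quantileAux_le_iff m hu _).1 le_rfl

lemma quantileAux_nonneg (h0 : ∀ x < (0:ℝ), ProbabilityTheory.cdf m x = 0) {u : ℝ}
    (hu : 0 < u) : 0 ≤ quantileAux m u := by
  refine Real.sInf_nonneg fun x hx => ?_
  by_contra hneg
  rw [Set.mem_setOf_eq, h0 x (not_le.1 hneg)] at hx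
  exact absurd hx (not_le.2 hu)

lemma measurable_quantileC : Measurable (quantileC m) := by
  refine measurable_of_Iic fun x => ?_
  have hset : quantileC m ⁻¹' Set.Iic x =
      (Set.Ioo (0:ℝ) 1 ∩ Set.Iic (ProbabilityTheory.cdf m x)) ∪
      ((Set.Ioo (0:ℝ) 1)ᶜ ∩ {u : ℝ | quantileAux m (1/2) ≤ x}) := by
    ext u
    by_cases hu : u ∈ Set.Ioo (0:ℝ) 1
    · simp [quantileC, hu, quantileAux_le_iff m hu x]
    · simp [quantileC, hu]
  rw [hset]
  have hc : MeasurableSet {u : ℝ | quantileAux m (1/2) ≤ x} :=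
    MeasurableSet.const _
  exact (measurableSet_Ioo.inter measurableSet_Iic).union
    (measurableSet_Ioo.compl.inter hc)

lemma map_quantileC :
    Measure.map (quantileC m) (volume.restrict (Set.Ioo (0:ℝ) 1)) = m := by
  have hmeas := measurable_quantileC m
  have hprob : IsProbabilityMeasure (volume.restrict (Set.Ioo (0:ℝ) 1)) := by
    constructor
    rw [Measure.restrict_apply MeasurableSet.univ, Set.univ_inter, Real.volume_Ioo]
    norm_num
  have : IsProbabilityMeasure
      (Measure.map (quantileC m) (volume.restrict (Set.Ioo (0:ℝ) 1))) :=
    Measure.isProbabilityMeasure_map hmeas.aemeasurable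
  refine Measure.ext_of_Iic _ _ (fun x => ?_)
  rw [Measure.map_apply hmeas measurableSet_Iic,
    Measure.restrict_apply (hmeas measurableSet_Iic)]
  have hset : quantileC m ⁻¹' Set.Iic x ∩ Set.Ioo 0 1
      = Set.Iic (ProbabilityTheory.cdf m x) ∩ Set.Ioo 0 1 := by
    ext u
    simp only [Set.mem_inter_iff, Set.mem_preimage, Set.mem_Iic, and_congr_left_iff]
    intro hu
    simp [quantileC, hu, quantileAux_le_iff m hu x]
  rw [hset, ← ProbabilityTheory.ofReal_cdf m x]
  have h0 : 0 ≤ ProbabilityTheory.cdf m x := ProbabilityTheory.cdf_nonneg m x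
  have h1 : ProbabilityTheory.cdf m x ≤ 1 := ProbabilityTheory.cdf_le_one m x
  rcases lt_or_eq_of_le h1 with h1 | h1
  · have heq : Set.Iic (ProbabilityTheory.cdf m x) ∩ Set.Ioo (0:ℝ) 1
        = Set.Ioc 0 (ProbabilityTheory.cdf m x) := by
      ext u
      simp only [Set.mem_inter_iff, Set.mem_Iic, Set.mem_Ioo, Set.mem_Ioc]
      constructor
      · rintro ⟨h, h2, _⟩; exact ⟨h2, h⟩
      · rintro ⟨h2, h⟩; exact ⟨h, h2, lt_of_le_of_lt h h1⟩
    rw [heq, Real.volume_Ioc, sub_zero]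
  · have heq : Set.Iic (ProbabilityTheory.cdf m x) ∩ Set.Ioo (0:ℝ) 1
        = Set.Ioo (0:ℝ) 1 := by
      rw [Set.inter_eq_right]
      intro u hu
      simp only [Set.mem_Iic]
      rw [← h1] at hu
      exact hu.2.le
    rw [heq, Real.volume_Ioo, ← h1]
    norm_num

end Quantile

/-- Stochastic domination around the origin is equivalent to the existence of a
coupling `(X', Y')` of `X` and `Y` with `min X' t0 ≤ min Y' t0` almost surely. -/
theorem stochastic_domination_around_origin_iff_coupling
    {Ω : Type*} [MeasurableSpace Ω] (μ : Measure Ω) [IsProbabilityMeasure μ]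
    (X Y : Ω → ℝ) (hX : Measurable X) (hY : Measurable Y)
    (hX0 : ∀ ω, 0 ≤ X ω) (hY0 : ∀ ω, 0 ≤ Y ω) :
    (∃ t0 > (0:ℝ), ∀ t ∈ Set.Icc (0:ℝ) t0, μ {ω | Y ω ≤ t} ≤ μ {ω | X ω ≤ t}) ↔
    (∃ t0 > (0:ℝ), ∃ (Ω' : Type) (_ : MeasurableSpace Ω') (ν : Measure Ω'),
        IsProbabilityMeasure ν ∧
        ∃ X' Y' : Ω' → ℝ, Measurable X' ∧ Measurable Y' ∧
          ν.map X' = μ.map X ∧ ν.map Y' = μ.map Y ∧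
          ∀ᵐ ω ∂ν, min (X' ω) t0 ≤ min (Y' ω) t0) := by
  constructor
  · rintro ⟨t0, ht0, hdom⟩
    set mX : Measure ℝ := μ.map X with hmX
    set mY : Measure ℝ := μ.map Y with hmY
    have hpX : IsProbabilityMeasure mX := Measure.isProbabilityMeasure_map hX.aemeasurable
    have hpY : IsProbabilityMeasure mY := Measure.isProbabilityMeasure_map hY.aemeasurable
    have hXIic : ∀ t, mX (Set.Iic t) = μ {ω | X ω ≤ t} := fun t => by
      rw [hmX, Measure.map_apply hX measurableSet_Iic]; rfl
    have hYIic : ∀ t, mY (Set.Iic t) = μ {ω | Y ω ≤ t} := fun t => by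
      rw [hmY, Measure.map_apply hY measurableSet_Iic]; rfl
    have hcdf : ∀ t ∈ Set.Icc (0:ℝ) t0,
        ProbabilityTheory.cdf mY t ≤ ProbabilityTheory.cdf mX t := by
      intro t ht
      rw [ProbabilityTheory.cdf_eq_real, ProbabilityTheory.cdf_eq_real, measureReal_def,
        measureReal_def]
      refine ENNReal.toReal_mono (measure_ne_top _ _) ?_
      rw [hXIic, hYIic]
      exact hdom t ht
    have hY0' : ∀ x < (0:ℝ), ProbabilityTheory.cdf mY x = 0 := by
      intro x hx
      rw [ProbabilityTheory.cdf_eq_real, measureReal_def, hYIic]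
      have h : {ω | Y ω ≤ x} = ∅ := by
        ext ω
        simp only [Set.mem_setOf_eq, Set.mem_empty_iff_false, iff_false, not_le]
        exact lt_of_lt_of_le hx (hY0 ω)
      rw [h]; simp
    refine ⟨t0, ht0, ℝ, inferInstance, volume.restrict (Set.Ioo (0:ℝ) 1), ?_,
      quantileC mX, quantileC mY, measurable_quantileC mX, measurable_quantileC mY,
      map_quantileC mX, map_quantileC mY, ?_⟩
    · constructor
      rw [Measure.restrict_apply MeasurableSet.univ, Set.univ_inter, Real.volume_Ioo]
      norm_num
    · rw [ae_restrict_iff' measurableSet_Ioo]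
      refine ae_of_all _ (fun u hu => ?_)
      simp only [quantileC, if_pos hu]
      set qY := quantileAux mY u with hqY
      by_cases hle : qY ≤ t0
      · have hq0 : 0 ≤ qY := quantileAux_nonneg mY hY0' hu.1
        have h1 : u ≤ ProbabilityTheory.cdf mY qY := le_cdf_quantileAux mY hu
        have h2 : ProbabilityTheory.cdf mY qY ≤ ProbabilityTheory.cdf mX qY :=
          hcdf qY ⟨hq0, hle⟩
        have h3 : quantileAux mX u ≤ qY := (quantileAux_le_iff mX hu qY).2 (h1.trans h2)
        exact min_le_min h3 le_rfl
      · exact le_trans (min_le_right _ _) (le_min (not_le.1 hle).le le_rfl)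
  · rintro ⟨t0, ht0, Ω', mΩ', ν, hν, X', Y', hX', hY', hmapX, hmapY, hae⟩
    refine ⟨t0 / 2, by linarith, fun t ht => ?_⟩
    have htlt : t < t0 := lt_of_le_of_lt ht.2 (by linarith)
    have hXt : μ {ω | X ω ≤ t} = ν {ω | X' ω ≤ t} := by
      have h : μ {ω | X ω ≤ t} = (μ.map X) (Set.Iic t) := by
        rw [Measure.map_apply hX measurableSet_Iic]; rfl
      rw [h, ← hmapX, Measure.map_apply hX' measurableSet_Iic]; rfl
    have hYt : μ {ω | Y ω ≤ t} = ν {ω | Y' ω ≤ t} := by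
      have h : μ {ω | Y ω ≤ t} = (μ.map Y) (Set.Iic t) := by
        rw [Measure.map_apply hY measurableSet_Iic]; rfl
      rw [h, ← hmapY, Measure.map_apply hY' measurableSet_Iic]; rfl
    rw [hXt, hYt]
    refine measure_mono_ae ?_
    filter_upwards [hae] with ω hω hYω
    have hYω : Y' ω ≤ t := hYω
    show X' ω ≤ t
    have h1 : min (X' ω) t0 ≤ t := le_trans hω (le_trans (min_le_left _ _) hYω)
    rcases min_le_iff.1 h1 with h | h
    · exact h
    · exact absurd h (not_le.2 htlt)
end

section
/- Let X and Y be nonnegative real-valued random variables with distribution functions F_X and F_Y. Then there exists K > 0 with F_X(t) ≥ F_Y(t) for all t > K if and only if there exists K > 0 and a coupling (X', Y') of X and Y such that max{X', K} ≤ max{Y', K} almost surely. -/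
open MeasureTheory


open MeasureTheory Set Filter ProbabilityTheory Topology

namespace TailDom

variable (m : Measure ℝ) [IsProbabilityMeasure m]

/-- Quantile function (generalized inverse cdf), set to 0 outside `(0,1)`. -/
noncomputable def quant (u : ℝ) : ℝ :=
  if u ∈ Set.Ioo (0:ℝ) 1 then sInf {t | u ≤ cdf m t} else 0

lemma set_nonempty {u : ℝ} (hu : u ∈ Set.Ioo (0:ℝ) 1) : {t | u ≤ cdf m t}.Nonempty :=
  ((tendsto_cdf_atTop m).eventually (eventually_ge_nhds hu.2)).exists

lemma set_bddBelow {u : ℝ} (hu : u ∈ Set.Ioo (0:ℝ) 1) : BddBelow {t | u ≤ cdf m t} := by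
  obtain ⟨t0, ht0⟩ := eventually_atBot.mp
    ((tendsto_cdf_atBot m).eventually (eventually_lt_nhds hu.1))
  exact ⟨t0, fun r hr => le_of_not_gt fun hlt => absurd hr (not_le.mpr (ht0 r hlt.le))⟩

lemma quant_le_iff {u : ℝ} (hu : u ∈ Set.Ioo (0:ℝ) 1) (t : ℝ) :
    quant m u ≤ t ↔ u ≤ cdf m t := by
  rw [quant, if_pos hu]
  constructor
  · intro h
    have key : ∀ s, sInf {t | u ≤ cdf m t} < s → u ≤ cdf m s := by
      intro s hs
      obtain ⟨r, hr, hrs⟩ := exists_lt_of_csInf_lt (set_nonempty m hu) hs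
      exact hr.trans (monotone_cdf m hrs.le)
    have hc : Tendsto (cdf m) (𝓝[>] (sInf {t | u ≤ cdf m t}))
        (𝓝 (cdf m (sInf {t | u ≤ cdf m t}))) :=
      ((cdf m).right_continuous _).tendsto.mono_left (nhdsWithin_mono _ Ioi_subset_Ici_self)
    have h0 : u ≤ cdf m (sInf {t | u ≤ cdf m t}) :=
      ge_of_tendsto hc (eventually_nhdsWithin_of_forall fun s hs => key s hs)
    exact h0.trans (monotone_cdf m h)
  · intro h
    exact csInf_le (set_bddBelow m hu) h

lemma quant_preimage (t : ℝ) :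
    quant m ⁻¹' (Iic t) =
      (Set.Ioo (0:ℝ) 1 ∩ Iic (cdf m t)) ∪ ((Set.Ioo (0:ℝ) 1)ᶜ ∩ {u : ℝ | (0:ℝ) ≤ t}) := by
  ext u
  by_cases hu : u ∈ Set.Ioo (0:ℝ) 1
  · simp [hu, quant_le_iff m hu t]
  · simp [hu, quant, Set.mem_Iic]

lemma measurable_quant : Measurable (quant m) := by
  apply measurable_of_Iic
  intro t
  rw [quant_preimage]
  exact ((measurableSet_Ioo.inter measurableSet_Iic).union
    (measurableSet_Ioo.compl.inter (MeasurableSet.const _)))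

lemma volume_inter_Iic (c : ℝ) (hc0 : 0 ≤ c) (hc1 : c ≤ 1) :
    volume (Set.Ioo (0:ℝ) 1 ∩ Iic c) = ENNReal.ofReal c := by
  apply le_antisymm
  · have : Set.Ioo (0:ℝ) 1 ∩ Iic c ⊆ Set.Ioc 0 c := fun u hu => ⟨hu.1.1, hu.2⟩
    calc volume (Set.Ioo (0:ℝ) 1 ∩ Iic c) ≤ volume (Set.Ioc (0:ℝ) c) := measure_mono this
      _ = ENNReal.ofReal c := by rw [Real.volume_Ioc, sub_zero]
  · have : Set.Ioo (0:ℝ) c ⊆ Set.Ioo (0:ℝ) 1 ∩ Iic c :=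
      fun u hu => ⟨⟨hu.1, lt_of_lt_of_le hu.2 hc1⟩, hu.2.le⟩
    calc ENNReal.ofReal c = volume (Set.Ioo (0:ℝ) c) := by rw [Real.volume_Ioo, sub_zero]
      _ ≤ _ := measure_mono this

instance : IsProbabilityMeasure (volume.restrict (Set.Ioo (0:ℝ) 1)) :=
  ⟨by simp [Real.volume_Ioo]⟩

lemma map_quant : (volume.restrict (Set.Ioo (0:ℝ) 1)).map (quant m) = m := by
  refine Measure.ext_of_Iic _ _ fun t => ?_
  rw [Measure.map_apply (measurable_quant m) measurableSet_Iic,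
    Measure.restrict_apply ((measurable_quant m) measurableSet_Iic), quant_preimage]
  have : ((Set.Ioo (0:ℝ) 1 ∩ Iic (cdf m t)) ∪ ((Set.Ioo (0:ℝ) 1)ᶜ ∩ {u : ℝ | (0:ℝ) ≤ t}))
      ∩ Set.Ioo (0:ℝ) 1 = Set.Ioo (0:ℝ) 1 ∩ Iic (cdf m t) := by
    ext u
    constructor
    · rintro ⟨h1 | h1, h2⟩
      · exact h1
      · exact absurd h2 h1.1
    · intro h; exact ⟨Or.inl h, h.1⟩
  rw [this, volume_inter_Iic _ (cdf_nonneg m t) (cdf_le_one m t), ofReal_cdf]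

lemma quant_max_le (m1 m2 : Measure ℝ) [IsProbabilityMeasure m1] [IsProbabilityMeasure m2]
    {K : ℝ} (h : ∀ t, K < t → cdf m2 t ≤ cdf m1 t) {u : ℝ} (hu : u ∈ Set.Ioo (0:ℝ) 1) :
    max (quant m1 u) K ≤ max (quant m2 u) K := by
  rw [max_le_iff]
  refine ⟨?_, le_max_right _ _⟩
  set t := max (quant m2 u) K with ht
  by_contra hcon
  push_neg at hcon
  set s := (t + quant m1 u) / 2 with hs
  have h1 : t < s := by simp only [hs]; linarith
  have h2 : s < quant m1 u := by simp only [hs]; linarith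
  have hK : K < s := lt_of_le_of_lt (le_max_right _ _) h1
  have h3 : quant m2 u ≤ s := le_of_lt (lt_of_le_of_lt (le_max_left _ _) h1)
  have h4 : u ≤ cdf m2 s := (quant_le_iff m2 hu s).mp h3
  have h5 : u ≤ cdf m1 s := h4.trans (h s hK)
  exact absurd ((quant_le_iff m1 hu s).mpr h5) (not_le.mpr h2)


theorem main_aux
    {Ω : Type*} [MeasurableSpace Ω] (μ : Measure Ω) [IsProbabilityMeasure μ]
    (X Y : Ω → ℝ) (hX : Measurable X) (hY : Measurable Y)
    (hX0 : ∀ ω, 0 ≤ X ω) (hY0 : ∀ ω, 0 ≤ Y ω) :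
    (∃ K > (0:ℝ), ∀ t : ℝ, K < t → μ {ω | Y ω ≤ t} ≤ μ {ω | X ω ≤ t}) ↔
    (∃ K > (0:ℝ), ∃ (Ω' : Type) (_ : MeasurableSpace Ω') (ν : Measure Ω'),
        IsProbabilityMeasure ν ∧
        ∃ X' Y' : Ω' → ℝ, Measurable X' ∧ Measurable Y' ∧
          ν.map X' = μ.map X ∧ ν.map Y' = μ.map Y ∧
          ∀ᵐ ω ∂ν, max (X' ω) K ≤ max (Y' ω) K) := by
  constructor
  · rintro ⟨K, hK, h⟩
    haveI h1 : IsProbabilityMeasure (μ.map X) := Measure.isProbabilityMeasure_map hX.aemeasurable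
    haveI h2 : IsProbabilityMeasure (μ.map Y) := Measure.isProbabilityMeasure_map hY.aemeasurable
    have hcdf : ∀ t, K < t → cdf (μ.map Y) t ≤ cdf (μ.map X) t := by
      intro t ht
      rw [cdf_eq_real, cdf_eq_real, measureReal_def, measureReal_def, Measure.map_apply hX measurableSet_Iic,
        Measure.map_apply hY measurableSet_Iic]
      exact ENNReal.toReal_mono (measure_ne_top _ _) (h t ht)
    refine ⟨K, hK, ℝ, inferInstance, volume.restrict (Set.Ioo (0:ℝ) 1), inferInstance,
      quant (μ.map X), quant (μ.map Y), measurable_quant _, measurable_quant _,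
      map_quant _, map_quant _, ?_⟩
    refine ae_of_all _ fun u => ?_
    by_cases hu : u ∈ Set.Ioo (0:ℝ) 1
    · exact quant_max_le _ _ hcdf hu
    · simp [quant, hu]
  · rintro ⟨K, hK, Ω', mΩ', ν, hν, X', Y', hX', hY', hmapX, hmapY, hae⟩
    refine ⟨K, hK, fun t ht => ?_⟩
    have e1 : μ {ω | Y ω ≤ t} = ν {ω | Y' ω ≤ t} := by
      have := Measure.map_apply hY (measurableSet_Iic (a := t)) (μ := μ)
      have h2 := Measure.map_apply hY' (measurableSet_Iic (a := t)) (μ := ν)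
      rw [hmapY] at h2
      rw [show {ω | Y ω ≤ t} = Y ⁻¹' Iic t from rfl,
        show {ω | Y' ω ≤ t} = Y' ⁻¹' Iic t from rfl, ← this, ← h2]
    have e2 : μ {ω | X ω ≤ t} = ν {ω | X' ω ≤ t} := by
      have := Measure.map_apply hX (measurableSet_Iic (a := t)) (μ := μ)
      have h2 := Measure.map_apply hX' (measurableSet_Iic (a := t)) (μ := ν)
      rw [hmapX] at h2
      rw [show {ω | X ω ≤ t} = X ⁻¹' Iic t from rfl,
        show {ω | X' ω ≤ t} = X' ⁻¹' Iic t from rfl, ← this, ← h2]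
    rw [e1, e2]
    apply measure_mono_ae
    filter_upwards [hae] with ω hω hYt
    have : max (Y' ω) K ≤ t := max_le hYt ht.le
    calc X' ω ≤ max (X' ω) K := le_max_left _ _
      _ ≤ max (Y' ω) K := hω
      _ ≤ t := this

end TailDom


/-- Tail domination is equivalent to the existence of a coupling `(X', Y')` of
`X` and `Y` with `max X' K ≤ max Y' K` almost surely. -/
theorem tail_domination_iff_tail_coupling
    {Ω : Type*} [MeasurableSpace Ω] (μ : Measure Ω) [IsProbabilityMeasure μ]
    (X Y : Ω → ℝ) (hX : Measurable X) (hY : Measurable Y)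
    (hX0 : ∀ ω, 0 ≤ X ω) (hY0 : ∀ ω, 0 ≤ Y ω) :
    (∃ K > (0:ℝ), ∀ t : ℝ, K < t → μ {ω | Y ω ≤ t} ≤ μ {ω | X ω ≤ t}) ↔
    (∃ K > (0:ℝ), ∃ (Ω' : Type) (_ : MeasurableSpace Ω') (ν : Measure Ω'),
        IsProbabilityMeasure ν ∧
        ∃ X' Y' : Ω' → ℝ, Measurable X' ∧ Measurable Y' ∧
          ν.map X' = μ.map X ∧ ν.map Y' = μ.map Y ∧
          ∀ᵐ ω ∂ν, max (X' ω) K ≤ max (Y' ω) K) := by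
  exact TailDom.main_aux μ X Y hX hY hX0 hY0
end

section
/- Let K ≥ 1 be an odd integer and p0 ∈ (1/(K+1), 1). Let X and Y be nonnegative integer-valued random variables with P(X = K) = P(Y = 0) = p0, with F_X(ℓ) ≥ F_Y(ℓ) for all ℓ > K, with F_X(ℓ) = F_Y(ℓ) for all odd ℓ > K, and with F_X(ℓ) = F_Y(ℓ) = 0 for ℓ < K except that F_Y(ℓ) = p0 for 0 ≤ ℓ < K. Then there exists s0 < 1 such that for all s ∈ (s0, 1), the generating functions satisfy E[s^X] < E[s^Y]. In particular, although Y tail-dominates X, the generating function of Y is not steeper at 1. -/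
open MeasureTheory

lemma pgf_eq {Ω : Type*} [MeasurableSpace Ω] (μ : Measure Ω) [IsProbabilityMeasure μ]
    (X : Ω → ℕ) (hX : Measurable X) (s : ℝ) (hs0 : 0 ≤ s) (hs1 : s < 1) :
    (∫ ω, s ^ (X ω) ∂μ) = ∑' ℓ : ℕ, ((1 - s) * s ^ ℓ) * (μ {ω | X ω ≤ ℓ}).toReal := by
  set f : ℕ → Ω → ℝ := fun ℓ ω => Set.indicator {ω | X ω ≤ ℓ} (fun _ => (1 - s) * s ^ ℓ) ω with hf
  have hmeas : ∀ ℓ, MeasurableSet {ω | X ω ≤ ℓ} := fun ℓ => hX measurableSet_Iic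
  have hpt : ∀ ω, HasSum (fun ℓ => f ℓ ω) (s ^ X ω) := by
    intro ω
    have hinj : Function.Injective (fun j : ℕ => X ω + j) := fun a b h => by simpa using h
    have h0 : ∀ x ∉ Set.range (fun j : ℕ => X ω + j), f x ω = 0 := by
      intro x hx
      have : ¬ (X ω ≤ x) := by
        intro h
        exact hx ⟨x - X ω, show X ω + (x - X ω) = x by omega⟩
      simp [hf, Set.indicator_of_notMem, this]
    rw [← Function.Injective.hasSum_iff hinj h0]
    have hgeo := (hasSum_geometric_of_lt_one hs0 hs1).mul_left ((1 - s) * s ^ X ω)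
    have h1s : (1 : ℝ) - s ≠ 0 := by linarith
    have : (1 - s) * s ^ X ω * (1 - s)⁻¹ = s ^ X ω := by field_simp
    rw [this] at hgeo
    have hfun : ((fun ℓ => f ℓ ω) ∘ fun j : ℕ => X ω + j) = fun i => (1 - s) * s ^ X ω * s ^ i := by
      funext j
      have : X ω ≤ X ω + j := Nat.le_add_right _ _
      simp only [Function.comp_apply, Function.comp, hf, Set.indicator_of_mem, this, Set.mem_setOf_eq]
      rw [pow_add]; ring
    rw [hfun]; exact hgeo
  have hrw : (∫ ω, s ^ (X ω) ∂μ) = ∫ ω, ∑' ℓ, f ℓ ω ∂μ := by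
    refine integral_congr_ae (Filter.Eventually.of_forall fun ω => ?_)
    exact ((hpt ω).tsum_eq).symm
  rw [hrw, integral_tsum]
  · refine tsum_congr fun ℓ => ?_
    rw [integral_indicator_const _ (hmeas ℓ)]
    simp [measure_univ, mul_comm]
    exact Or.inl rfl
  · exact fun ℓ => (measurable_const.indicator (hmeas ℓ)).aestronglyMeasurable
  · have hb : ∀ ℓ : ℕ, (∫⁻ ω, ‖f ℓ ω‖₊ ∂μ) ≤ ‖(1 - s) * s ^ ℓ‖₊ := by
      intro ℓ
      calc (∫⁻ ω, ‖f ℓ ω‖₊ ∂μ) ≤ ∫⁻ _, (‖(1 - s) * s ^ ℓ‖₊ : ENNReal) ∂μ := by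
            refine lintegral_mono fun ω => ?_
            simp only [hf]
            by_cases h : X ω ≤ ℓ <;> simp [Set.indicator_of_mem, Set.indicator_of_notMem, h, Set.mem_setOf_eq]
        _ = ‖(1 - s) * s ^ ℓ‖₊ := by simp [measure_univ]
    refine ne_top_of_le_ne_top ?_ (ENNReal.tsum_le_tsum hb)
    rw [ENNReal.tsum_coe_ne_top_iff_summable]
    have : Summable (fun ℓ : ℕ => (1 - s) * s ^ ℓ) :=
      (summable_geometric_of_lt_one hs0 hs1).mul_left _
    rw [← NNReal.summable_coe]
    refine this.abs.congr fun ℓ => ?_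
    simp [Real.norm_eq_abs, abs_mul, abs_pow]

set_option maxHeartbeats 1000000 in
/-- Tail-domination need not imply a steeper generating function at 1:
with `P(X = K) = P(Y = 0) = p0`, `F_X ≥ F_Y` beyond `K` with equality at odd
points, the generating function of `X` is eventually strictly below that of `Y`. -/
theorem tail_domination_not_steeper_generating_function
    {Ω : Type*} [MeasurableSpace Ω] (μ : Measure Ω) [IsProbabilityMeasure μ]
    (X Y : Ω → ℕ) (hX : Measurable X) (hY : Measurable Y)
    (K : ℕ) (hK1 : 1 ≤ K) (hKodd : Odd K)
    (p0 : ℝ) (hp0l : 1 / (K + 1 : ℝ) < p0) (hp0u : p0 < 1)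
    (hXK : (μ {ω | X ω = K}).toReal = p0)
    (hY0 : (μ {ω | Y ω = 0}).toReal = p0)
    (hdom : ∀ ℓ : ℕ, K < ℓ →
      (μ {ω | Y ω ≤ ℓ}).toReal ≤ (μ {ω | X ω ≤ ℓ}).toReal)
    (hodd : ∀ ℓ : ℕ, K < ℓ → Odd ℓ →
      (μ {ω | X ω ≤ ℓ}).toReal = (μ {ω | Y ω ≤ ℓ}).toReal)
    (hXbelow : ∀ ℓ : ℕ, ℓ < K → (μ {ω | X ω ≤ ℓ}).toReal = 0)
    (hYbelow : ∀ ℓ : ℕ, ℓ < K → (μ {ω | Y ω ≤ ℓ}).toReal = p0) :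
    ∃ s0 < (1:ℝ), ∀ s ∈ Set.Ioo s0 1,
      (∫ ω, s ^ (X ω) ∂μ) < ∫ ω, s ^ (Y ω) ∂μ := by
  -- notation
  set FX : ℕ → ℝ := fun ℓ => (μ {ω | X ω ≤ ℓ}).toReal with hFX
  set FY : ℕ → ℝ := fun ℓ => (μ {ω | Y ω ≤ ℓ}).toReal with hFY
  have hK0 : (0:ℝ) < (K:ℝ) := by exact_mod_cast hK1
  have hp0pos : 0 < p0 := lt_trans (by positivity) hp0l
  have hεpos : 0 < p0 * (K + 1) - 1 := by
    have := (div_lt_iff₀ (by positivity : (0:ℝ) < (K:ℝ) + 1)).mp hp0l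
    linarith
  set ε : ℝ := p0 * (K + 1) - 1 with hε
  -- basic facts about FX, FY
  have hFnonneg : ∀ ℓ, 0 ≤ FX ℓ ∧ 0 ≤ FY ℓ := fun ℓ => ⟨ENNReal.toReal_nonneg, ENNReal.toReal_nonneg⟩
  have hle1 : ∀ (Z : Ω → ℕ) (ℓ : ℕ), (μ {ω | Z ω ≤ ℓ}).toReal ≤ 1 := by
    intro Z ℓ
    have h := measure_mono (μ := μ) (Set.subset_univ {ω | Z ω ≤ ℓ})
    have := ENNReal.toReal_mono (measure_ne_top μ _) h
    simpa [measure_univ] using this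
  have hmono : ∀ (Z : Ω → ℕ) (a b : ℕ), a ≤ b →
      (μ {ω | Z ω ≤ a}).toReal ≤ (μ {ω | Z ω ≤ b}).toReal := by
    intro Z a b hab
    refine ENNReal.toReal_mono (measure_ne_top μ _) (measure_mono fun ω hω => le_trans hω hab)
  -- F_X K = p0
  have hFXK : FX K = p0 := by
    have hset : {ω | X ω ≤ K} = {ω | X ω ≤ K - 1} ∪ {ω | X ω = K} := by
      ext ω; simp only [Set.mem_setOf_eq, Set.mem_union]; omega
    have hdisj : Disjoint {ω | X ω ≤ K - 1} {ω | X ω = K} := by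
      rw [Set.disjoint_left]; intro ω h1 h2
      simp only [Set.mem_setOf_eq] at h1 h2; omega
    have hm2 : MeasurableSet {ω | X ω = K} := hX (measurableSet_singleton K)
    have : μ {ω | X ω ≤ K} = μ {ω | X ω ≤ K - 1} + μ {ω | X ω = K} := by
      rw [hset, measure_union hdisj hm2]
    have htr : FX K = FX (K - 1) + (μ {ω | X ω = K}).toReal := by
      rw [hFX]
      simp only [this, ENNReal.toReal_add (measure_ne_top μ _) (measure_ne_top μ _)]
    have h5 : FX (K - 1) = 0 := hXbelow _ (by omega)
    rw [htr, h5, hXK, zero_add]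
  have hFYK1 : p0 ≤ FY (K + 1) := by
    have := hmono Y (K - 1) (K + 1) (by omega)
    rw [hYbelow (K - 1) (by omega)] at this
    exact this
  have hFYK : p0 ≤ FY K := by
    have := hmono Y (K - 1) K (by omega)
    rw [hYbelow (K - 1) (by omega)] at this
    exact this
  -- choose s0
  refine ⟨max (1 - ε / (p0 * (K:ℝ)^2)) (1/2), ?_, ?_⟩
  · apply max_lt
    · have : 0 < ε / (p0 * (K:ℝ)^2) := by positivity
      linarith
    · norm_num
  intro s hs
  obtain ⟨hslb, hs1⟩ := hs
  have hshalf : 1/2 < s := lt_of_le_of_lt (le_max_right _ _) hslb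
  have hs0 : 0 ≤ s := by linarith
  have h1ms : 1 - s < ε / (p0 * (K:ℝ)^2) := by
    have := lt_of_le_of_lt (le_max_left _ _) hslb
    linarith
  have h1mspos : 0 < 1 - s := by linarith
  rw [pgf_eq μ X hX s hs0 hs1, pgf_eq μ Y hY s hs0 hs1]
  -- summability
  have hgeo : Summable (fun ℓ : ℕ => (1 - s) * s ^ ℓ) :=
    (summable_geometric_of_lt_one hs0 hs1).mul_left _
  have hsumZ : ∀ (Z : Ω → ℕ), Summable (fun ℓ : ℕ => ((1 - s) * s ^ ℓ) * (μ {ω | Z ω ≤ ℓ}).toReal) := by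
    intro Z
    refine Summable.of_nonneg_of_le (fun ℓ => by positivity) (fun ℓ => ?_) hgeo
    calc ((1 - s) * s ^ ℓ) * (μ {ω | Z ω ≤ ℓ}).toReal ≤ ((1 - s) * s ^ ℓ) * 1 :=
          mul_le_mul_of_nonneg_left (hle1 Z ℓ) (by positivity)
      _ = (1 - s) * s ^ ℓ := by ring
  have hSX := hsumZ X
  have hSY := hsumZ Y
  rw [← sub_pos, ← hSY.tsum_sub hSX]
  set g : ℕ → ℝ := fun ℓ => ((1 - s) * s ^ ℓ) * FY ℓ - ((1 - s) * s ^ ℓ) * FX ℓ with hg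
  have hSg : Summable g := hSY.sub hSX
  -- split
  have hsplit := Summable.sum_add_tsum_nat_add (f := g) (K + 1) hSg
  -- finite part
  have hfin : (K:ℝ) * ((1 - s) * s ^ K * p0) ≤ ∑ ℓ ∈ Finset.range (K + 1), g ℓ := by
    rw [Finset.sum_range_succ]
    have hgK : 0 ≤ g K := by
      have : FX K ≤ FY K := by rw [hFXK]; exact hFYK
      have h2 : 0 ≤ (1 - s) * s ^ K := by positivity
      simp only [hg]
      nlinarith
    have hterm : ∀ ℓ ∈ Finset.range K, (1 - s) * s ^ K * p0 ≤ g ℓ := by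
      intro ℓ hℓ
      rw [Finset.mem_range] at hℓ
      have h1 : FX ℓ = 0 := hXbelow ℓ hℓ
      have h2 : FY ℓ = p0 := hYbelow ℓ hℓ
      simp only [hg, h1, h2, mul_zero, sub_zero]
      have hpow : s ^ K ≤ s ^ ℓ := pow_le_pow_of_le_one hs0 (le_of_lt hs1) (le_of_lt hℓ)
      have := mul_le_mul_of_nonneg_right (mul_le_mul_of_nonneg_left hpow h1mspos.le) hp0pos.le
      linarith
    have := Finset.card_nsmul_le_sum (Finset.range K) g ((1 - s) * s ^ K * p0) hterm
    simp only [Finset.card_range, nsmul_eq_mul] at this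
    linarith
  -- tail bound
  set b : ℕ → ℝ := fun j => FY (j + (K + 2)) - FY (j + (K + 1)) with hb
  have hbnn : ∀ j, 0 ≤ b j := fun j => sub_nonneg.mpr (hmono Y _ _ (by omega))
  have hbsum_le : ∀ n : ℕ, ∑ i ∈ Finset.range n, b i ≤ 1 - p0 := by
    intro n
    have hcg : ∑ i ∈ Finset.range n, b i
        = ∑ i ∈ Finset.range n, (FY ((i + 1) + (K + 1)) - FY (i + (K + 1))) := by
      refine Finset.sum_congr rfl fun i _ => ?_
      have e1 : i + (K + 2) = (i + 1) + (K + 1) := by omega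
      simp only [hb, e1]
    have : ∑ i ∈ Finset.range n, (FY ((i + 1) + (K + 1)) - FY (i + (K + 1)))
        = FY (n + (K + 1)) - FY (0 + (K + 1)) :=
      Finset.sum_range_sub (fun j => FY (j + (K + 1))) n
    rw [hcg, this]
    have := hle1 Y (n + (K + 1))
    simp only [Nat.zero_add]
    have := hFYK1
    simp only [hFY] at *
    linarith [hle1 Y (n + (K + 1))]
  have hbsummable : Summable b := summable_of_sum_range_le hbnn hbsum_le
  have hbT : ∑' j, b j ≤ 1 - p0 := Real.tsum_le_of_sum_range_le hbnn hbsum_le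
  have htailterm : ∀ j : ℕ, -((1 - s) * b j) ≤ g (j + (K + 1)) := by
    intro j
    set ℓ := j + (K + 1) with hℓ
    have hKℓ : K < ℓ := by omega
    have hkey : FX ℓ ≤ FY (ℓ + 1) := by
      rcases Nat.even_or_odd ℓ with he | ho
      · have hodd' : Odd (ℓ + 1) := Even.add_one he
        have := hodd (ℓ + 1) (by omega) hodd'
        calc FX ℓ ≤ FX (ℓ + 1) := hmono X ℓ (ℓ + 1) (by omega)
          _ = FY (ℓ + 1) := this
      · calc FX ℓ = FY ℓ := hodd ℓ hKℓ ho
          _ ≤ FY (ℓ + 1) := hmono Y ℓ (ℓ + 1) (by omega)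
    have hbj : b j = FY (ℓ + 1) - FY ℓ := by
      have e1 : j + (K + 2) = ℓ + 1 := by omega
      have e2 : j + (K + 1) = ℓ := by omega
      simp only [hb, e1, e2]
    have hdiff : -(b j) ≤ FY ℓ - FX ℓ := by rw [hbj]; linarith
    have hpow1 : s ^ ℓ ≤ 1 := pow_le_one₀ hs0 (le_of_lt hs1)
    have hpownn : 0 ≤ s ^ ℓ := by positivity
    have : g ℓ = (1 - s) * s ^ ℓ * (FY ℓ - FX ℓ) := by simp only [hg]; ring
    rw [this]
    nlinarith [mul_le_mul_of_nonneg_left hdiff (mul_nonneg h1mspos.le hpownn),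
      mul_le_mul_of_nonneg_left hpow1 (mul_nonneg h1mspos.le (hbnn j))]
  have htail : -((1 - s) * (1 - p0)) ≤ ∑' j, g (j + (K + 1)) := by
    have hltsum : Summable (fun j => -((1 - s) * b j)) := ((hbsummable.mul_left (1 - s)).neg)
    have hrsum : Summable (fun j => g (j + (K + 1))) := (summable_nat_add_iff (K + 1)).2 hSg
    have h1 := Summable.tsum_le_tsum htailterm hltsum hrsum
    have h2 : ∑' j, -((1 - s) * b j) = -((1 - s) * ∑' j, b j) := by
      rw [tsum_neg, tsum_mul_left]
    rw [h2] at h1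
    have : (1 - s) * ∑' j, b j ≤ (1 - s) * (1 - p0) :=
      mul_le_mul_of_nonneg_left hbT (le_of_lt h1mspos)
    linarith
  -- combine
  have hcomb : (K:ℝ) * ((1 - s) * s ^ K * p0) - (1 - s) * (1 - p0) ≤ ∑' ℓ, g ℓ := by
    rw [← hsplit]; linarith
  -- final numeric estimate
  have hbern : 1 - (K:ℝ) * (1 - s) ≤ s ^ K := by
    have := one_add_mul_le_pow (a := s - 1) (by linarith) K
    have h : (1 : ℝ) + (s - 1) = s := by ring
    rw [h] at this
    linarith
  have hfinal : 0 < (K:ℝ) * ((1 - s) * s ^ K * p0) - (1 - s) * (1 - p0) := by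
    have h1 : p0 * (K:ℝ)^2 * (1 - s) < ε := by
      have hpk : 0 < p0 * (K:ℝ)^2 := by positivity
      calc p0 * (K:ℝ)^2 * (1 - s) < p0 * (K:ℝ)^2 * (ε / (p0 * (K:ℝ)^2)) := by
            exact mul_lt_mul_of_pos_left h1ms hpk
        _ = ε := by field_simp
    have h2 : (K:ℝ) * p0 * s ^ K ≥ (K:ℝ) * p0 * (1 - (K:ℝ) * (1 - s)) := by
      have : 0 ≤ (K:ℝ) * p0 := by positivity
      exact mul_le_mul_of_nonneg_left hbern this
    have h3 : (K:ℝ) * p0 * (1 - (K:ℝ) * (1 - s)) = (K:ℝ) * p0 - p0 * (K:ℝ)^2 * (1 - s) := by ring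
    have h4 : (K:ℝ) * p0 - ε = 1 - p0 := by rw [hε]; ring
    have h5 : 1 - p0 < (K:ℝ) * p0 * s ^ K := by linarith
    have h6 := mul_pos h1mspos (sub_pos.mpr h5)
    have hgoal : (K:ℝ) * ((1 - s) * s ^ K * p0) - (1 - s) * (1 - p0)
        = (1 - s) * ((K:ℝ) * p0 * s ^ K - (1 - p0)) := by ring
    rw [hgoal]
    exact h6
  linarith
end

section
/- Let F, G : [0,∞) → [0,1] be two distribution functions (non-decreasing, right-continuous, F(0) = G(0) = 0) whose generalized inverses satisfy ∫_{1/ε}^∞ F^{(−1)}(e^{−u})(1/u) du < ∞ and ∫_{1/ε}^∞ G^{(−1)}(e^{−u})(1/u) du < ∞ for some ε > 0. Then the product H(t) = F(t)·G(t) (the distribution function of the maximum of independent σ ~ F and γ ~ G) also satisfies ∫_{1/ε'}^∞ H^{(−1)}(e^{−u})(1/u) du < ∞ for some ε' > 0. -/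
open MeasureTheory Set
open scoped ENNReal

/-- The generalized inverse `F^{(-1)}(y) = inf {t : F(t) ≥ y}` of a distribution
function. -/
noncomputable def geninv (F : ℝ → ℝ) (y : ℝ) : ℝ := sInf {t : ℝ | y ≤ F t}

private lemma geninv_mem_pos {F : ℝ → ℝ} (hF0 : ∀ t ≤ (0:ℝ), F t = 0) {y t : ℝ}
    (hy : 0 < y) (ht : y ≤ F t) : 0 < t := by
  by_contra h
  push_neg at h
  rw [hF0 t h] at ht
  linarith

private lemma geninv_bddBelow {F : ℝ → ℝ} (hF0 : ∀ t ≤ (0:ℝ), F t = 0) {y : ℝ}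
    (hy : 0 < y) : BddBelow {t : ℝ | y ≤ F t} :=
  ⟨0, fun t ht => (geninv_mem_pos hF0 hy ht).le⟩

private lemma geninv_nonneg {F : ℝ → ℝ} (hF0 : ∀ t ≤ (0:ℝ), F t = 0) {y : ℝ}
    (hy : 0 < y) : 0 ≤ geninv F y :=
  Real.sInf_nonneg (fun t ht => (geninv_mem_pos hF0 hy ht).le)

/-- The key pointwise bound : `(F·G)^{(-1)}(s²) ≤ F^{(-1)}(s) + G^{(-1)}(s)`, provided
the two sets involved on the right are nonempty. -/
private lemma geninv_key {F G : ℝ → ℝ} (hFm : Monotone F) (hGm : Monotone G)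
    (hF0 : ∀ t ≤ (0:ℝ), F t = 0) (hG0 : ∀ t ≤ (0:ℝ), G t = 0)
    {s t₀ t₁ : ℝ} (hs : 0 < s) (h₀ : s ≤ F t₀) (h₁ : s ≤ G t₁) :
    geninv (fun t => F t * G t) (s * s) ≤ geninv F s + geninv G s := by
  have ha : 0 ≤ geninv F s := geninv_nonneg hF0 hs
  have hb : 0 ≤ geninv G s := geninv_nonneg hG0 hs
  have hSbdd : BddBelow {t : ℝ | s * s ≤ F t * G t} := by
    refine ⟨0, fun t ht => ?_⟩
    by_contra h
    push_neg at h
    have : F t = 0 := hF0 t h.le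
    simp only [mem_setOf_eq, this, zero_mul] at ht
    nlinarith
  have hmax : geninv (fun t => F t * G t) (s * s) ≤ max (geninv F s) (geninv G s) := by
    apply le_of_forall_gt_imp_ge_of_dense
    intro x hx
    rw [max_lt_iff] at hx
    obtain ⟨hax, hbx⟩ := hx
    -- find witnesses below x in each set
    obtain ⟨tF, htF, htFx⟩ := (csInf_lt_iff (geninv_bddBelow hF0 hs) ⟨t₀, h₀⟩).mp hax
    obtain ⟨tG, htG, htGx⟩ := (csInf_lt_iff (geninv_bddBelow hG0 hs) ⟨t₁, h₁⟩).mp hbx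
    have hFx : s ≤ F x := le_trans htF (hFm htFx.le)
    have hGx : s ≤ G x := le_trans htG (hGm htGx.le)
    have hxS : x ∈ {t : ℝ | s * s ≤ F t * G t} :=
      mul_le_mul hFx hGx hs.le (le_trans hs.le hFx)
    exact csInf_le hSbdd hxS
  exact hmax.trans (max_le (le_add_of_nonneg_right hb) (le_add_of_nonneg_left ha))

/-- Substitution `u = 2v` for set lintegrals over `Ici`. -/
private lemma lintegral_Ici_two_mul (f : ℝ → ℝ≥0∞) (c : ℝ) :
    ∫⁻ v in Ici c, f (2 * v) = ENNReal.ofReal (1 / 2) * ∫⁻ u in Ici (2 * c), f u := by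
  have hemb : MeasurableEmbedding (fun v : ℝ => 2 * v) :=
    (Homeomorph.mulLeft₀ (2 : ℝ) two_ne_zero).measurableEmbedding
  have hmap : Measure.map (fun v : ℝ => (2 : ℝ) * v) volume
      = ENNReal.ofReal |(2 : ℝ)⁻¹| • volume := Real.map_volume_mul_left two_ne_zero
  have hpre : (fun v : ℝ => 2 * v) ⁻¹' (Ici (2 * c)) = Ici c := by
    ext v
    simp only [mem_preimage, mem_Ici]
    constructor <;> intro h <;> nlinarith
  calc ∫⁻ v in Ici c, f (2 * v)
      = ∫⁻ v in (fun v : ℝ => 2 * v) ⁻¹' (Ici (2 * c)), f (2 * v) := by rw [hpre]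
    _ = ∫⁻ u, f u ∂((Measure.map (fun v : ℝ => 2 * v) volume).restrict (Ici (2 * c))) := by
        rw [Measure.restrict_map (measurable_const_mul 2) measurableSet_Ici,
          hemb.lintegral_map]
    _ = ENNReal.ofReal (1 / 2) * ∫⁻ u in Ici (2 * c), f u := by
        rw [hmap, Measure.restrict_smul, lintegral_smul_measure, smul_eq_mul,
          show |(2:ℝ)⁻¹| = 1/2 by rw [abs_of_pos] <;> norm_num]

/-- If the generalized inverses of distribution functions `F` and `G` satisfy the
explosion integral criterion, then so does that of the product `F·G` (the
distribution function of the maximum of independent `σ ~ F` and `γ ~ G`). -/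
theorem integral_criterion_for_product_of_distribution_functions
    (F G : ℝ → ℝ) (hFmono : Monotone F) (hGmono : Monotone G)
    (hFrc : ∀ t : ℝ, ContinuousWithinAt F (Ici t) t)
    (hGrc : ∀ t : ℝ, ContinuousWithinAt G (Ici t) t)
    (hF0 : ∀ t ≤ (0:ℝ), F t = 0) (hG0 : ∀ t ≤ (0:ℝ), G t = 0)
    (hF1 : ∀ t, F t ≤ 1) (hG1 : ∀ t, G t ≤ 1)
    (ε : ℝ) (hε : 0 < ε)
    (hFint : ∫⁻ u in Ici (1 / ε),
      ENNReal.ofReal (geninv F (Real.exp (-u)) * (1 / u)) ≠ ⊤)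
    (hGint : ∫⁻ u in Ici (1 / ε),
      ENNReal.ofReal (geninv G (Real.exp (-u)) * (1 / u)) ≠ ⊤) :
    ∃ ε' > (0:ℝ), ∫⁻ u in Ici (1 / ε'),
      ENNReal.ofReal (geninv (fun t => F t * G t) (Real.exp (-u)) * (1 / u)) ≠ ⊤ := by
  -- Degenerate cases: F ≡ 0 or G ≡ 0, in which case F·G ≡ 0 and the geninv vanishes.
  by_cases hFz : ∀ t, F t ≤ 0
  · refine ⟨ε, hε, ?_⟩
    have hH : ∀ u : ℝ, geninv (fun t => F t * G t) (Real.exp (-u)) = 0 := by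
      intro u
      have hset : {t : ℝ | Real.exp (-u) ≤ F t * G t} = ∅ := by
        ext t
        simp only [mem_setOf_eq, mem_empty_iff_false, iff_false, not_le]
        have hFt : F t = 0 := le_antisymm (hFz t) (by
          rcases le_or_gt t 0 with h | h
          · exact (hF0 t h).ge
          · rw [← hF0 0 le_rfl]; exact hFmono h.le)
        rw [hFt, zero_mul]
        exact Real.exp_pos _
      rw [geninv, hset, Real.sInf_empty]
    simp [hH]
  by_cases hGz : ∀ t, G t ≤ 0
  · refine ⟨ε, hε, ?_⟩
    have hH : ∀ u : ℝ, geninv (fun t => F t * G t) (Real.exp (-u)) = 0 := by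
      intro u
      have hset : {t : ℝ | Real.exp (-u) ≤ F t * G t} = ∅ := by
        ext t
        simp only [mem_setOf_eq, mem_empty_iff_false, iff_false, not_le]
        have hGt : G t = 0 := le_antisymm (hGz t) (by
          rcases le_or_gt t 0 with h | h
          · exact (hG0 t h).ge
          · rw [← hG0 0 le_rfl]; exact hGmono h.le)
        rw [hGt, mul_zero]
        exact Real.exp_pos _
      rw [geninv, hset, Real.sInf_empty]
    simp [hH]
  push_neg at hFz hGz
  obtain ⟨t₀, ht₀⟩ := hFz
  obtain ⟨t₁, ht₁⟩ := hGz
  set c : ℝ := max (1 / ε) (max (-Real.log (F t₀)) (-Real.log (G t₁))) with hc_def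
  have hc : 0 < c := lt_of_lt_of_le (one_div_pos.mpr hε) (le_max_left _ _)
  refine ⟨1 / (2 * c), by positivity, ?_⟩
  rw [one_div_one_div]
  -- For all u ≥ 2c the exponential is below F t₀ and G t₁
  have hsF : ∀ u ∈ Ici (2 * c), Real.exp (-(u / 2)) ≤ F t₀ := by
    intro u hu
    rw [mem_Ici] at hu
    have h1 : -(u / 2) ≤ Real.log (F t₀) := by
      have : -Real.log (F t₀) ≤ c := le_trans (le_max_left _ _) (le_max_right _ _)
      linarith
    calc Real.exp (-(u / 2)) ≤ Real.exp (Real.log (F t₀)) := Real.exp_le_exp.mpr h1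
      _ = F t₀ := Real.exp_log ht₀
  have hsG : ∀ u ∈ Ici (2 * c), Real.exp (-(u / 2)) ≤ G t₁ := by
    intro u hu
    rw [mem_Ici] at hu
    have h1 : -(u / 2) ≤ Real.log (G t₁) := by
      have : -Real.log (G t₁) ≤ c := le_trans (le_max_right _ _) (le_max_right _ _)
      linarith
    calc Real.exp (-(u / 2)) ≤ Real.exp (Real.log (G t₁)) := Real.exp_le_exp.mpr h1
      _ = G t₁ := Real.exp_log ht₁
  set A : ℝ → ℝ := fun u => geninv F (Real.exp (-(u / 2))) with hA_def
  set B : ℝ → ℝ := fun u => geninv G (Real.exp (-(u / 2))) with hB_def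
  -- measurability of the A-part on the set
  have hAanti : AntitoneOn A (Ici (2 * c)) := by
    intro u₁ hu₁ u₂ hu₂ h12
    refine csInf_le_csInf (geninv_bddBelow hF0 (Real.exp_pos _)) ⟨t₀, hsF u₁ hu₁⟩ ?_
    intro x hx
    exact le_trans (Real.exp_le_exp.mpr (by linarith)) hx
  have hBanti : AntitoneOn B (Ici (2 * c)) := by
    intro u₁ hu₁ u₂ hu₂ h12
    refine csInf_le_csInf (geninv_bddBelow hG0 (Real.exp_pos _)) ⟨t₁, hsG u₁ hu₁⟩ ?_
    intro x hx
    exact le_trans (Real.exp_le_exp.mpr (by linarith)) hx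
  have hAmeas : AEMeasurable (fun u => ENNReal.ofReal (A u * (1 / u)))
      (volume.restrict (Ici (2 * c))) := by
    have h1 : AEMeasurable A (volume.restrict (Ici (2 * c))) :=
      aemeasurable_restrict_of_antitoneOn measurableSet_Ici hAanti
    exact ENNReal.measurable_ofReal.comp_aemeasurable
      (h1.mul (measurable_const.div measurable_id).aemeasurable)
  have hBmeas : AEMeasurable (fun u => ENNReal.ofReal (B u * (1 / u)))
      (volume.restrict (Ici (2 * c))) := by
    have h1 : AEMeasurable B (volume.restrict (Ici (2 * c))) :=
      aemeasurable_restrict_of_antitoneOn measurableSet_Ici hBanti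
    exact ENNReal.measurable_ofReal.comp_aemeasurable
      (h1.mul (measurable_const.div measurable_id).aemeasurable)
  -- substitution identity for each part
  have hsub : ∀ K : ℝ → ℝ,
      (∫⁻ u in Ici (2 * c), ENNReal.ofReal (geninv K (Real.exp (-(u / 2))) * (1 / u)))
      = ∫⁻ v in Ici c, ENNReal.ofReal (geninv K (Real.exp (-v)) * (1 / v)) := by
    intro K
    have h2 := lintegral_Ici_two_mul
      (fun u => ENNReal.ofReal (geninv K (Real.exp (-(u / 2))) * (1 / u))) c
    have h3 : ∀ v : ℝ, ENNReal.ofReal (geninv K (Real.exp (-(2 * v / 2))) * (1 / (2 * v)))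
        = ENNReal.ofReal (1 / 2) * ENNReal.ofReal (geninv K (Real.exp (-v)) * (1 / v)) := by
      intro v
      have hv : (2 : ℝ) * v / 2 = v := by ring
      rw [hv, ← ENNReal.ofReal_mul (by norm_num : (0:ℝ) ≤ 1 / 2)]
      congr 1
      rcases eq_or_ne v 0 with h | h
      · simp [h]
      · field_simp
    simp only [h3] at h2
    rw [lintegral_const_mul' _ _ ENNReal.ofReal_ne_top] at h2
    have hne0 : ENNReal.ofReal (1/2 : ℝ) ≠ 0 := by
      simp [ENNReal.ofReal_eq_zero]
    exact ((ENNReal.mul_right_inj hne0 ENNReal.ofReal_ne_top).mp h2).symm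
  -- the pointwise bound and the final estimate
  have hbound : (∫⁻ u in Ici (2 * c),
        ENNReal.ofReal (geninv (fun t => F t * G t) (Real.exp (-u)) * (1 / u)))
      ≤ (∫⁻ u in Ici (2 * c), ENNReal.ofReal (A u * (1 / u)))
        + ∫⁻ u in Ici (2 * c), ENNReal.ofReal (B u * (1 / u)) := by
    rw [← lintegral_add_left' hAmeas]
    apply lintegral_mono_ae
    filter_upwards [ae_restrict_mem measurableSet_Ici] with u hu
    have hupos : 0 < u := lt_of_lt_of_le (by linarith) hu
    have hexp : Real.exp (-(u / 2)) * Real.exp (-(u / 2)) = Real.exp (-u) := by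
      rw [← Real.exp_add]; ring_nf
    have hkey : geninv (fun t => F t * G t) (Real.exp (-u)) ≤ A u + B u := by
      rw [← hexp]
      exact geninv_key hFmono hGmono hF0 hG0 (Real.exp_pos _) (hsF u hu) (hsG u hu)
    calc ENNReal.ofReal (geninv (fun t => F t * G t) (Real.exp (-u)) * (1 / u))
        ≤ ENNReal.ofReal ((A u + B u) * (1 / u)) :=
          ENNReal.ofReal_le_ofReal
            (mul_le_mul_of_nonneg_right hkey (by positivity))
      _ = ENNReal.ofReal (A u * (1 / u) + B u * (1 / u)) := by rw [add_mul]
      _ = ENNReal.ofReal (A u * (1 / u)) + ENNReal.ofReal (B u * (1 / u)) :=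
          ENNReal.ofReal_add
            (mul_nonneg (geninv_nonneg hF0 (Real.exp_pos _)) (by positivity))
            (mul_nonneg (geninv_nonneg hG0 (Real.exp_pos _)) (by positivity))
  have hIci : Ici c ⊆ Ici (1 / ε) := Ici_subset_Ici.mpr (le_max_left _ _)
  have hAfin : (∫⁻ u in Ici (2 * c), ENNReal.ofReal (A u * (1 / u))) ≠ ⊤ := by
    rw [hA_def]
    simp only
    rw [hsub F]
    exact ne_top_of_le_ne_top hFint (lintegral_mono_set hIci)
  have hBfin : (∫⁻ u in Ici (2 * c), ENNReal.ofReal (B u * (1 / u))) ≠ ⊤ := by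
    rw [hB_def]
    simp only
    rw [hsub G]
    exact ne_top_of_le_ne_top hGint (lintegral_mono_set hIci)
  exact ne_top_of_le_ne_top (ENNReal.add_ne_top.mpr ⟨hAfin, hBfin⟩) hbound
end

section
/- Let F : [0,1] → [0,1] be a distribution function satisfying F(3^{−n}) = 2^{−n} for all n ≥ 0 (e.g., the distribution function of the natural measure on the Cantor set). Then its generalized inverse satisfies F^{(−1)}(u) ≤ 3·u^{log 3/log 2} for all u ∈ (0, 1/2), and consequently ∫_0^{1/2} F^{(−1)}(e^{−1/y})·(1/y) dy ≤ 3·∫_2^∞ e^{−(log 3/log 2)·z}·(1/z) dz < ∞. -/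
open MeasureTheory Set
open scoped ENNReal

section Aux

variable {F : ℝ → ℝ}

lemma cantorF_zero (hFmono : Monotone F) (hF01 : ∀ t : ℝ, F t ∈ Icc (0:ℝ) 1)
    (hF : ∀ n : ℕ, F (1 / 3 ^ n) = 1 / 2 ^ n) : F 0 = 0 := by
  refine le_antisymm ?_ (hF01 0).1
  by_contra h
  push_neg at h
  obtain ⟨n, hn⟩ := exists_pow_lt_of_lt_one h (by norm_num : (1:ℝ)/2 < 1)
  have h1 : F 0 ≤ F (1 / 3 ^ n) := hFmono (by positivity)
  rw [hF n] at h1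
  have : (1:ℝ) / 2 ^ n = (1/2) ^ n := by rw [div_pow, one_pow]
  linarith [h1, hn, this ▸ h1]

lemma cantor_geninv_bound (hFmono : Monotone F) (hF01 : ∀ t : ℝ, F t ∈ Icc (0:ℝ) 1)
    (hF : ∀ n : ℕ, F (1 / 3 ^ n) = 1 / 2 ^ n) :
    ∀ u ∈ Ioo (0:ℝ) (1 / 2), geninv F u ≤ 3 * u ^ (Real.log 3 / Real.log 2) := by
  intro u hu
  obtain ⟨hu0, hu2⟩ := hu
  have hF0 : F 0 = 0 := cantorF_zero hFmono hF01 hF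
  have hL2 : (0:ℝ) < Real.log 2 := Real.log_pos one_lt_two
  have hL3 : (0:ℝ) < Real.log 3 := Real.log_pos (by norm_num)
  set x : ℝ := -Real.log u / Real.log 2 with hx
  have hlogu : Real.log u < -Real.log 2 := by
    have := Real.log_lt_log hu0 hu2
    rwa [show (1:ℝ)/2 = 2⁻¹ by norm_num, Real.log_inv] at this
  have hx1 : 1 < x := by
    rw [hx, lt_div_iff₀ hL2]
    linarith
  set n : ℕ := ⌊x⌋₊ with hn
  have hn1 : 1 ≤ n := Nat.le_floor (by exact_mod_cast hx1.le)
  have hnx : (n : ℝ) ≤ x := Nat.floor_le (by linarith)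
  have hxn : x < n + 1 := Nat.lt_floor_add_one x
  -- log u = -x * log 2
  have hlogux : Real.log u = -(x * Real.log 2) := by
    rw [hx]; field_simp
  -- u ≤ 1 / 2 ^ n
  have hu_le : u ≤ 1 / 2 ^ n := by
    have h1 : u = Real.exp (Real.log u) := (Real.exp_log hu0).symm
    have h2 : Real.exp (Real.log u) ≤ Real.exp (-((n:ℝ) * Real.log 2)) := by
      apply Real.exp_le_exp.mpr
      rw [hlogux]
      have : (n:ℝ) * Real.log 2 ≤ x * Real.log 2 :=
        mul_le_mul_of_nonneg_right hnx hL2.le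
      linarith
    have h3 : Real.exp (-((n:ℝ) * Real.log 2)) = 1 / 2 ^ n := by
      rw [Real.exp_neg, Real.exp_nat_mul, Real.exp_log (by norm_num : (0:ℝ) < 2)]
      simp [one_div]
    rw [h1]; rw [h3] at h2; exact h2
  -- geninv F u ≤ 1 / 3 ^ n
  have hmem : (1:ℝ) / 3 ^ n ∈ {t : ℝ | u ≤ F t} := by
    simp only [mem_setOf_eq, hF n]; exact hu_le
  have hbdd : BddBelow {t : ℝ | u ≤ F t} := by
    refine ⟨0, fun t ht => ?_⟩
    by_contra h
    push_neg at h
    have : F t ≤ F 0 := hFmono h.le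
    rw [hF0] at this
    exact absurd (le_trans ht this) (not_le.mpr hu0)
  have hgi : geninv F u ≤ 1 / 3 ^ n := csInf_le hbdd hmem
  -- 1 / 3 ^ n ≤ 3 * u ^ (log 3 / log 2)
  have hrpow : u ^ (Real.log 3 / Real.log 2) = Real.exp (-(x * Real.log 3)) := by
    rw [Real.rpow_def_of_pos hu0, hlogux]
    congr 1; field_simp
  have hkey : (1:ℝ) / 3 ^ n ≤ 3 * u ^ (Real.log 3 / Real.log 2) := by
    rw [hrpow]
    have h1 : Real.exp (-((n:ℝ) + 1) * Real.log 3) ≤ Real.exp (-(x * Real.log 3)) := by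
      apply Real.exp_le_exp.mpr
      have : x * Real.log 3 ≤ ((n:ℝ) + 1) * Real.log 3 :=
        mul_le_mul_of_nonneg_right hxn.le hL3.le
      linarith
    have h2 : 3 * Real.exp (-((n:ℝ) + 1) * Real.log 3) = 1 / 3 ^ n := by
      have e3 : Real.exp (Real.log 3) = 3 := Real.exp_log (by norm_num)
      rw [show -((n:ℝ)+1) * Real.log 3 = -(((n:ℝ)+1) * Real.log 3) by ring,
        Real.exp_neg, show ((n:ℝ)+1) * Real.log 3 = ((n+1 : ℕ):ℝ) * Real.log 3 by push_cast; ring,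
        Real.exp_nat_mul, e3]
      rw [pow_succ]
      field_simp
    calc (1:ℝ) / 3 ^ n = 3 * Real.exp (-((n:ℝ) + 1) * Real.log 3) := h2.symm
      _ ≤ 3 * Real.exp (-(x * Real.log 3)) := by linarith
  linarith

end Aux

/-- For a distribution function with `F(3^{-n}) = 2^{-n}` (e.g. the Cantor
distribution), `F^{(-1)}(u) ≤ 3 u^{log 3/log 2}` on `(0,1/2)`, and hence the
explosion integral `∫_0^{1/2} F^{(-1)}(e^{-1/y})/y dy` is bounded by
`3 ∫_2^∞ e^{-(log 3/log 2) z}/z dz < ∞`. -/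
theorem cantor_distribution_is_explosive
    (F : ℝ → ℝ) (hFmono : Monotone F)
    (hF01 : ∀ t : ℝ, F t ∈ Icc (0:ℝ) 1)
    (hF : ∀ n : ℕ, F (1 / 3 ^ n) = 1 / 2 ^ n) :
    (∀ u ∈ Ioo (0:ℝ) (1 / 2),
      geninv F u ≤ 3 * u ^ (Real.log 3 / Real.log 2)) ∧
    (∫⁻ y in Ioc (0:ℝ) (1 / 2),
        ENNReal.ofReal (geninv F (Real.exp (-1 / y)) * (1 / y))) ≤
      ENNReal.ofReal
        (3 * ∫ z in Ici (2:ℝ), Real.exp (-(Real.log 3 / Real.log 2) * z) * (1 / z)) ∧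
    (∫⁻ y in Ioc (0:ℝ) (1 / 2),
        ENNReal.ofReal (geninv F (Real.exp (-1 / y)) * (1 / y))) ≠ ⊤ := by
  have hbd := cantor_geninv_bound hFmono hF01 hF
  set α : ℝ := Real.log 3 / Real.log 2 with hα
  have hL2 : (0:ℝ) < Real.log 2 := Real.log_pos one_lt_two
  have hL3 : (0:ℝ) < Real.log 3 := Real.log_pos (by norm_num)
  have hα0 : 0 < α := div_pos hL3 hL2
  have hα1 : 1 ≤ α := (one_le_div hL2).mpr (Real.log_le_log (by norm_num) (by norm_num))
  -- ψ y := exp (-α / y) * (1/y),  g z := exp (-α z) * (1/z)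
  set ψ : ℝ → ℝ := fun y => Real.exp (-α * (1/y)) * (1/y) with hψ
  set g : ℝ → ℝ := fun z => Real.exp (-α * z) * (1/z) with hg
  -- integrability of g on Ioi 2
  have hg_meas : AEStronglyMeasurable g (volume.restrict (Ioi (2:ℝ))) := by
    apply ContinuousOn.aestronglyMeasurable _ measurableSet_Ioi
    apply ContinuousOn.mul (Continuous.continuousOn
      (Real.continuous_exp.comp (continuous_const.mul continuous_id)))
    exact continuousOn_const.div continuousOn_id fun z hz => by
      exact ne_of_gt (lt_trans two_pos hz)
  have hg_int : IntegrableOn g (Ioi (2:ℝ)) := by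
    refine MeasureTheory.Integrable.mono (exp_neg_integrableOn_Ioi 2 hα0) hg_meas ?_
    filter_upwards [ae_restrict_mem measurableSet_Ioi] with z hz
    have hz2 : (2:ℝ) < z := hz
    have hz0 : (0:ℝ) < z := by linarith
    have h1 : ‖g z‖ = Real.exp (-α * z) * (1/z) := by
      rw [Real.norm_eq_abs, abs_of_nonneg]; positivity
    rw [h1, Real.norm_eq_abs, abs_of_nonneg (Real.exp_pos _).le]
    have : (1:ℝ)/z ≤ 1 := by rw [div_le_one hz0]; linarith
    nlinarith [Real.exp_pos (-α * z)]
  -- integrability of ψ on Ioc 0 (1/2)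
  have hψ_meas : AEStronglyMeasurable ψ (volume.restrict (Ioc (0:ℝ) (1/2))) := by
    apply ContinuousOn.aestronglyMeasurable _ measurableSet_Ioc
    have h1 : ContinuousOn (fun y : ℝ => 1/y) (Ioc (0:ℝ) (1/2)) :=
      continuousOn_const.div continuousOn_id fun y hy => ne_of_gt hy.1
    exact (Real.continuous_exp.comp_continuousOn (h1.const_smul (-α))).mul h1
  have hψ_bound : ∀ y ∈ Ioc (0:ℝ) (1/2), ψ y ≤ 1/α := by
    intro y hy
    have hy0 : (0:ℝ) < y := hy.1
    set t : ℝ := 1/y with ht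
    have ht0 : 0 < t := by positivity
    have h1 : α * t + 1 ≤ Real.exp (α * t) := by
      have := Real.add_one_le_exp (α * t); linarith
    have hat : 0 < α * t := by positivity
    have h2 : Real.exp (-α * t) ≤ 1 / (α * t) := by
      rw [neg_mul, Real.exp_neg, inv_eq_one_div]
      apply one_div_le_one_div_of_le hat
      linarith
    have hey : ψ y = Real.exp (-α * t) * t := rfl
    rw [hey]
    calc Real.exp (-α * t) * t ≤ (1 / (α * t)) * t :=
          mul_le_mul_of_nonneg_right h2 ht0.le
      _ = 1 / α := by field_simp
  have hψ_nonneg : ∀ y ∈ Ioc (0:ℝ) (1/2), 0 ≤ ψ y := by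
    intro y hy
    have hy0 : (0:ℝ) < y := hy.1
    have : (0:ℝ) < ψ y := by
      have : ψ y = Real.exp (-α * (1/y)) * (1/y) := rfl
      rw [this]; positivity
    exact this.le
  have hm1 : Measurable fun y : ℝ => (1:ℝ)/y := measurable_const.div measurable_id
  have hmψ : Measurable ψ := ((hm1.const_mul (-α)).exp).mul hm1
  have hψ_int : IntegrableOn ψ (Ioc (0:ℝ) (1/2)) := by
    refine Measure.integrableOn_of_bounded (M := 1/α) (by simp) ?_ ?_
    · exact hmψ.aestronglyMeasurable
    · filter_upwards [ae_restrict_mem measurableSet_Ioc] with y hy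
      rw [Real.norm_eq_abs, abs_of_nonneg (hψ_nonneg y hy)]
      exact hψ_bound y hy
  -- change of variables : ∫_{Ioc 0 (1/2)} ψ = ∫_{Ioi 2} g
  have hsub : ∫ y in Ioc (0:ℝ) (1/2), ψ y = ∫ z in Ioi (2:ℝ), g z := by
    set b : ℕ → ℝ := fun n => 1 / ((n:ℝ) + 2) with hb
    have hb_pos : ∀ n, 0 < b n := fun n => by positivity
    have hb_le : ∀ n, b n ≤ 1/2 := fun n => by
      apply div_le_div_of_nonneg_left one_pos.le two_pos
      have : (0:ℝ) ≤ (n:ℝ) := Nat.cast_nonneg n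
      linarith
    have hb_tendsto : Filter.Tendsto b Filter.atTop (nhds 0) := by
      have h1 : Filter.Tendsto (fun n : ℕ => ((n:ℝ) + 2)) Filter.atTop Filter.atTop :=
        Filter.tendsto_atTop_add_const_right _ 2 tendsto_natCast_atTop_atTop
      simpa [hb, one_div, Pi.inv_def] using h1.inv_tendsto_atTop
    have hφ : AECover (volume.restrict (Ioc (0:ℝ) (1/2))) Filter.atTop
        (fun n : ℕ => Ioi (b n)) := by
      constructor
      · filter_upwards [ae_restrict_mem measurableSet_Ioc] with y hy
        have := hb_tendsto.eventually_lt_const hy.1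
        filter_upwards [this] with n hn
        exact hn
      · intro n; exact measurableSet_Ioi
    have t1 := hφ.integral_tendsto_of_countably_generated (f := ψ) hψ_int
    have hident : ∀ n : ℕ, (∫ x in Ioi (b n), ψ x ∂(volume.restrict (Ioc (0:ℝ) (1/2))))
        = ∫ x in (b n)..(1/2), ψ x := by
      intro n
      rw [Measure.restrict_restrict measurableSet_Ioi,
        intervalIntegral.integral_of_le (hb_le n)]
      have hset : Ioi (b n) ∩ Ioc (0:ℝ) (1/2) = Ioc (b n) (1/2) := by
        ext x
        simp only [mem_inter_iff, mem_Ioi, mem_Ioc]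
        constructor
        · rintro ⟨h1, h2, h3⟩; exact ⟨h1, h3⟩
        · rintro ⟨h1, h2⟩; exact ⟨h1, lt_trans (hb_pos n) h1, h2⟩
      rw [hset]
    have hcv : ∀ n : ℕ, ∫ x in (b n)..(1/2), ψ x = ∫ z in (2:ℝ)..((n:ℝ)+2), g z := by
      intro n
      have huIcc : uIcc (b n) (1/2) = Icc (b n) (1/2) := uIcc_of_le (hb_le n)
      have hpos : ∀ x ∈ uIcc (b n) (1/2), (0:ℝ) < x := by
        intro x hx
        rw [huIcc] at hx
        exact lt_of_lt_of_le (hb_pos n) hx.1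
      have hf_cont : ContinuousOn (fun y : ℝ => 1/y) (uIcc (b n) (1/2)) :=
        continuousOn_const.div continuousOn_id fun y hy => (hpos y hy).ne'
      have hderiv : ∀ x ∈ Ioo (b n ⊓ (1/2)) (b n ⊔ (1/2)),
          HasDerivWithinAt (fun y : ℝ => 1/y) (-(1/x^2)) (Ioi x) x := by
        intro x hx
        have hx0 : x ≠ 0 := by
          have : b n ⊓ (1/2) = b n := min_eq_left (hb_le n)
          rw [this] at hx
          exact (lt_trans (hb_pos n) hx.1).ne'
        have := (hasDerivAt_inv hx0).hasDerivWithinAt (s := Ioi x)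
        simpa [one_div] using this
      have hf'_cont : ContinuousOn (fun x : ℝ => -(1/x^2)) (uIcc (b n) (1/2)) := by
        apply ContinuousOn.neg
        exact continuousOn_const.div (continuousOn_pow 2) fun x hx => by
          have := hpos x hx; positivity
      have hg_cont : ContinuousOn g ((fun y : ℝ => 1/y) '' uIcc (b n) (1/2)) := by
        apply ContinuousOn.mul (Continuous.continuousOn
          (Real.continuous_exp.comp (continuous_const.mul continuous_id)))
        apply continuousOn_const.div continuousOn_id
        rintro z ⟨y, hy, rfl⟩
        have h0 := hpos y hy
        simp only [id_eq]
        positivity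
      have key := intervalIntegral.integral_comp_smul_deriv'' hf_cont hderiv hf'_cont hg_cont
      have hfb : (1:ℝ) / b n = (n:ℝ) + 2 := by
        rw [hb]; rw [one_div_one_div]
      have lhs_eq : ∫ x in (b n)..(1/2), (fun x : ℝ => -(1/x^2)) x • (g ∘ (fun y : ℝ => 1/y)) x
          = ∫ x in (b n)..(1/2), -ψ x := by
        apply intervalIntegral.integral_congr
        intro x hx
        have hx0 : (0:ℝ) < x := hpos x hx
        simp only [Function.comp_apply, smul_eq_mul]
        have hψx : ψ x = Real.exp (-α * (1/x)) * (1/x) := rfl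
        have hgx : g (1/x) = Real.exp (-α * (1/x)) * x := by
          show Real.exp (-α * (1/x)) * (1/(1/x)) = _
          rw [one_div_one_div]
        rw [hgx, hψx]
        field_simp
      rw [lhs_eq, hfb] at key
      rw [intervalIntegral.integral_neg] at key
      have hkey2 := neg_eq_iff_eq_neg.mp key
      rw [hkey2, ← intervalIntegral.integral_symm]
      norm_num
    have t2 : Filter.Tendsto (fun n : ℕ => ∫ z in (2:ℝ)..((n:ℝ)+2), g z) Filter.atTop
        (nhds (∫ z in Ioi (2:ℝ), g z)) := by
      apply intervalIntegral_tendsto_integral_Ioi 2 hg_int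
      exact Filter.tendsto_atTop_add_const_right _ 2 tendsto_natCast_atTop_atTop
    have t1' : Filter.Tendsto (fun n : ℕ => ∫ z in (2:ℝ)..((n:ℝ)+2), g z) Filter.atTop
        (nhds (∫ y in Ioc (0:ℝ) (1/2), ψ y)) := by
      refine t1.congr fun n => ?_
      rw [hident n, hcv n]
    exact tendsto_nhds_unique t1' t2
  -- comparison of lintegrals
  have hcomp : (∫⁻ y in Ioc (0:ℝ) (1 / 2),
        ENNReal.ofReal (geninv F (Real.exp (-1 / y)) * (1 / y))) ≤
      ∫⁻ y in Ioc (0:ℝ) (1 / 2), ENNReal.ofReal (3 * ψ y) := by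
    apply setLIntegral_mono
    · exact ENNReal.measurable_ofReal.comp (hmψ.const_mul 3)
    · intro y hy
      have hy0 : (0:ℝ) < y := hy.1
      have hy2 : y ≤ 1/2 := hy.2
      set u : ℝ := Real.exp (-1 / y) with hu
      have hu0 : 0 < u := Real.exp_pos _
      have h2y : (2:ℝ) ≤ 1/y := by
        rw [le_div_iff₀ hy0]; linarith
      have hu_lt : u < 1/2 := by
        have h1 : u ≤ Real.exp (-2) := by
          apply Real.exp_le_exp.mpr
          rw [neg_div]
          linarith
        have h2 : Real.exp (-2) < 1/2 := by
          rw [Real.exp_neg]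
          have h3 : (3:ℝ) ≤ Real.exp 2 := by
            have := Real.add_one_le_exp (2:ℝ); linarith
          rw [inv_eq_one_div]
          have he : (0:ℝ) < Real.exp 2 := Real.exp_pos 2
          rw [div_lt_div_iff₀ he two_pos]
          linarith
        linarith
      have hgeninv := hbd u ⟨hu0, hu_lt⟩
      have hrpow : u ^ α = Real.exp (-α * (1/y)) := by
        rw [Real.rpow_def_of_pos hu0, hu, Real.log_exp]
        congr 1
        field_simp
      apply ENNReal.ofReal_le_ofReal
      have : geninv F u * (1/y) ≤ (3 * u ^ α) * (1/y) :=
        mul_le_mul_of_nonneg_right hgeninv (by positivity)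
      calc geninv F u * (1/y) ≤ (3 * u ^ α) * (1/y) := this
        _ = 3 * ψ y := by rw [hrpow]; show _ = 3 * (Real.exp (-α * (1/y)) * (1/y)); ring
  -- evaluate the bounding lintegral
  have heq : (∫⁻ y in Ioc (0:ℝ) (1/2), ENNReal.ofReal (3 * ψ y)) =
      ENNReal.ofReal (3 * ∫ z in Ici (2:ℝ), Real.exp (-α * z) * (1 / z)) := by
    rw [← ofReal_integral_eq_lintegral_ofReal (hψ_int.const_mul 3)]
    · congr 1
      rw [MeasureTheory.integral_const_mul, hsub, integral_Ici_eq_integral_Ioi]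
    · rw [Filter.EventuallyLE, ae_restrict_iff' measurableSet_Ioc]
      filter_upwards with y hy
      have := hψ_nonneg y hy
      simp only [Pi.zero_apply]
      positivity
  refine ⟨hbd, ?_, ?_⟩
  · exact le_trans hcomp heq.le
  · exact ne_top_of_le_ne_top ENNReal.ofReal_ne_top (le_trans hcomp heq.le)
end

section
/- Let F_σ, F_I : [0,∞) → [0,1] be distribution functions with F_σ(0) = F_I(0) = 0, and define F_{I<σ}(t) = ∫_0^t F_I(x) dF_σ(x) (Lebesgue–Stieltjes integral). Suppose there exist a ∈ (0,1), q ∈ [0,1) and t0 > 0 such that F_σ(a t) ≤ q·F_σ(t) for all t ∈ (0, t0]. Then for all t ∈ (0, t0], F_{I<σ}(t) ≥ (1−q)·F_σ(t)·F_I(a t). -/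
open MeasureTheory Set

/-- Lower bound for the backward-epidemic birth-time distribution
`F_{I<σ}(t) = ∫_0^t F_I dF_σ`: if `F_σ(a t) ≤ q F_σ(t)` on `(0, t0]`, then
`F_{I<σ}(t) ≥ (1-q) F_σ(t) F_I(a t)` there. -/
theorem backward_birth_time_lower_bound
    (Fσ FI : StieltjesFunction ℝ)
    (hσ0 : ∀ t ≤ (0:ℝ), Fσ t = 0) (hI0 : ∀ t ≤ (0:ℝ), FI t = 0)
    (hσ1 : ∀ t : ℝ, Fσ t ≤ 1) (hI1 : ∀ t : ℝ, FI t ≤ 1)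
    (a q t0 : ℝ) (ha : a ∈ Ioo (0:ℝ) 1) (hq : q ∈ Ico (0:ℝ) 1) (ht0 : 0 < t0)
    (hdom : ∀ t ∈ Ioc (0:ℝ) t0, Fσ (a * t) ≤ q * Fσ t) :
    ∀ t ∈ Ioc (0:ℝ) t0,
      (1 - q) * Fσ t * FI (a * t) ≤ ∫ x in Ioc (0:ℝ) t, FI x ∂Fσ.measure := by
  intro t ht
  obtain ⟨htpos, htle⟩ := ht
  set μ := Fσ.measure
  have hFInn : ∀ x : ℝ, 0 ≤ FI x := by
    intro x
    rcases le_or_gt x 0 with h | h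
    · exact (hI0 x h).ge
    · rw [← hI0 0 le_rfl]; exact FI.mono h.le
  have hmeas : Measurable FI := FI.mono.measurable
  have hat : a * t ≤ t := by nlinarith [ha.1, ha.2]
  have hatpos : 0 < a * t := mul_pos ha.1 htpos
  -- integrability of FI on (0, t]
  have hfin : μ (Ioc (0:ℝ) t) ≠ ⊤ := by
    rw [Fσ.measure_Ioc]; exact ENNReal.ofReal_ne_top
  have hint : IntegrableOn FI (Ioc (0:ℝ) t) μ := by
    apply Measure.integrableOn_of_bounded (M := 1) hfin hmeas.aestronglyMeasurable
    filter_upwards with x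
    rw [Real.norm_eq_abs, abs_of_nonneg (hFInn x)]
    exact hI1 x
  have hsub : Ioc (a * t) t ⊆ Ioc (0:ℝ) t := Ioc_subset_Ioc_left hatpos.le
  have h1 : ∫ x in Ioc (a * t) t, FI x ∂μ ≤ ∫ x in Ioc (0:ℝ) t, FI x ∂μ := by
    apply setIntegral_mono_set hint
    · filter_upwards with x using hFInn x
    · exact Filter.Eventually.of_forall hsub
  have hfin2 : μ (Ioc (a * t) t) ≠ ⊤ := by
    rw [Fσ.measure_Ioc]; exact ENNReal.ofReal_ne_top
  have h2 : ∫ x in Ioc (a * t) t, (FI (a * t)) ∂μ ≤ ∫ x in Ioc (a * t) t, FI x ∂μ := by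
    apply setIntegral_mono_on (integrableOn_const hfin2)
      (hint.mono_set hsub) measurableSet_Ioc
    intro x hx
    exact FI.mono hx.1.le
  have hconst : ∫ x in Ioc (a * t) t, (FI (a * t)) ∂μ
      = (Fσ t - Fσ (a * t)) * FI (a * t) := by
    rw [setIntegral_const, measureReal_def, Fσ.measure_Ioc, ENNReal.toReal_ofReal (by linarith [Fσ.mono hat]),
      smul_eq_mul]
  have key : (1 - q) * Fσ t * FI (a * t) ≤ (Fσ t - Fσ (a * t)) * FI (a * t) := by
    apply mul_le_mul_of_nonneg_right _ (hFInn _)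
    have := hdom t ⟨htpos, htle⟩
    nlinarith
  calc (1 - q) * Fσ t * FI (a * t)
      ≤ (Fσ t - Fσ (a * t)) * FI (a * t) := key
    _ = ∫ x in Ioc (a * t) t, (FI (a * t)) ∂μ := hconst.symm
    _ ≤ ∫ x in Ioc (a * t) t, FI x ∂μ := h2
    _ ≤ ∫ x in Ioc (0:ℝ) t, FI x ∂μ := h1
end
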